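/- With F the 2d × 2d block of the NB-matrix B of G indexed by the directed edges incident to a node c of degree d, det(F − tI) = t^{2d} for every real t; equivalently, the characteristic polynomial of F is t^{2d}. -/

import Mathlib

open Matrix

/-- The non-backtracking matrix of a simple graph `G`: rows and columns are indexed by
darts (directed edges); entry `(k→l, i→j)` is `δ_{jk} (1 - δ_{il})`. -/
def nbMatrix {V : Type*} [DecidableEq V] (G : SimpleGraph V) :
    Matrix G.Dart G.Dart ℝ := fun r c =>
  (if c.toProd.2 = r.toProd.1 then (1 : ℝ) else 0) *
  (if c.toProd.1 = r.toProd.2 then 0 else 1)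

/-- Darts (directed edges) not incident to the node `c`. -/
abbrev NonIncDart {V : Type*} (G : SimpleGraph V) (c : V) :=
  {e : G.Dart // e.toProd.1 ≠ c ∧ e.toProd.2 ≠ c}

/-- Darts (directed edges) incident to the node `c`. -/
abbrev IncDart {V : Type*} (G : SimpleGraph V) (c : V) :=
  {e : G.Dart // e.toProd.1 = c ∨ e.toProd.2 = c}

/-- The block `B'` of the NB-matrix: rows and columns indexed by darts not incident to `c`. -/
def blockB' {V : Type*} [DecidableEq V] (G : SimpleGraph V) (c : V) :
    Matrix (NonIncDart G c) (NonIncDart G c) ℝ := fun r s => nbMatrix G r.val s.val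

/-- The block `D`: rows indexed by darts not incident to `c`, columns by darts incident to `c`. -/
def blockD {V : Type*} [DecidableEq V] (G : SimpleGraph V) (c : V) :
    Matrix (NonIncDart G c) (IncDart G c) ℝ := fun r s => nbMatrix G r.val s.val

/-- The block `E`: rows indexed by darts incident to `c`, columns by darts not incident to `c`. -/
def blockE {V : Type*} [DecidableEq V] (G : SimpleGraph V) (c : V) :
    Matrix (IncDart G c) (NonIncDart G c) ℝ := fun r s => nbMatrix G r.val s.val

/-- The block `F`: rows and columns indexed by darts incident to `c`. -/
def blockF {V : Type*} [DecidableEq V] (G : SimpleGraph V) (c : V) :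
    Matrix (IncDart G c) (IncDart G c) ℝ := fun r s => nbMatrix G r.val s.val


section Proof
variable {V : Type*} [Fintype V] [DecidableEq V] (G : SimpleGraph V) [DecidableRel G.Adj] (c : V)

lemma blockF_ne_zero {r s : IncDart G c} (h : blockF G c r s ≠ 0) :
    r.val.toProd.1 = c ∧ s.val.toProd.2 = c := by
  unfold blockF nbMatrix at h
  by_cases h1 : s.val.toProd.2 = r.val.toProd.1
  · by_cases h2 : s.val.toProd.1 = r.val.toProd.2
    · simp [h1, h2] at h
    · rcases r.property with hr | hr
      · exact ⟨hr, h1.trans hr⟩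
      · exfalso
        rcases s.property with hs | hs
        · exact h2 (hs.trans hr.symm)
        · exact r.val.adj.ne (by rw [← h1, hs, hr])
  · simp [h1] at h

lemma blockF_sq : blockF G c * blockF G c = 0 := by
  ext r u
  rw [Matrix.mul_apply]
  apply Finset.sum_eq_zero
  intro s _
  by_cases h1 : blockF G c r s = 0
  · simp [h1]
  by_cases h2 : blockF G c s u = 0
  · simp [h2]
  exact absurd (((blockF_ne_zero G c h1).2).trans ((blockF_ne_zero G c h2).1).symm)
    s.val.adj.ne.symm

lemma card_incDart : Fintype.card (IncDart G c) = 2 * G.degree c := by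
  have hdisj : Disjoint (fun e : G.Dart => e.toProd.1 = c) (fun e => e.toProd.2 = c) := by
    rw [Pi.disjoint_iff]
    intro e
    simp only [Prop.disjoint_iff]
    intro h1
    exact e.adj.ne (h1.1.trans h1.2.symm)
  rw [Fintype.card_subtype_or_disjoint _ _ hdisj]
  have h1 : Fintype.card {e : G.Dart // e.toProd.1 = c} = G.degree c := by
    rw [Fintype.card_subtype]
    exact G.dart_fst_fiber_card_eq_degree c
  have h2 : Fintype.card {e : G.Dart // e.toProd.2 = c} = G.degree c := by
    rw [← h1]
    apply Fintype.card_congr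
    exact ⟨fun d => ⟨d.val.symm, by simp [d.property]⟩,
      fun d => ⟨d.val.symm, by simp [d.property]⟩,
      fun d => by simp, fun d => by simp⟩
  omega

lemma charpoly_blockF : (blockF G c).charpoly = Polynomial.X ^ (2 * G.degree c) := by
  have hnil : IsNilpotent (blockF G c) := ⟨2, by rw [pow_two]; exact blockF_sq G c⟩
  have := Matrix.isNilpotent_charpoly_sub_pow_of_isNilpotent hnil
  rw [isNilpotent_iff_eq_zero, sub_eq_zero] at this
  rw [this, card_incDart]

end Proof

theorem det_blockF_sub_smul_one {V : Type*} [Fintype V] [DecidableEq V]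
    (G : SimpleGraph V) [DecidableRel G.Adj] (c : V) :
    (∀ t : ℝ, (blockF G c - t • 1).det = t ^ (2 * G.degree c)) ∧
      (blockF G c).charpoly = Polynomial.X ^ (2 * G.degree c) := by
  refine ⟨fun t => ?_, charpoly_blockF G c⟩
  have h1 : (Polynomial.eval t (blockF G c).charpoly) = (t • 1 - blockF G c).det := by
    rw [Matrix.charpoly, _root_.eval_det, Matrix.matPolyEquiv_charmatrix]
    congr 1
    simp [Matrix.scalar, Algebra.smul_def, Matrix.algebraMap_eq_diagonal,
      Matrix.diagonal_one, Polynomial.eval_sub, Polynomial.eval_X, Polynomial.eval_C]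
  have h2 : (blockF G c - t • 1) = (-1 : ℝ) • (t • 1 - blockF G c) := by ring_nf; module
  rw [h2, Matrix.det_smul, ← h1, charpoly_blockF, Polynomial.eval_pow, Polynomial.eval_X,
    card_incDart]
  have : Even (2 * G.degree c) := even_two_mul _
  rw [this.neg_one_pow, one_mul]
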